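/- Fix β ∈ (0,∞), p̄ ∈ (0,1), and set p₀ := p̄/(p̄ + (1−p̄)·exp(−2dβ)). For every finite Λ ⊆ ℤ^d, the probability measure ν'_{Λ,β,p̄} on {0,1}^Λ is stochastically dominated by the i.i.d. Bernoulli(p₀) measure P_{Λ,p₀}: for every increasing function f : {0,1}^Λ → [0,∞), E_{ν'_{Λ,β,p̄}}[f] ≤ E_{P_{Λ,p₀}}[f]. In particular, for every x ∈ Λ and every r₁ ∈ {0,1}^{Λ∖{x}}, writing r₁^+ (resp. r₁^−) for the extension of r₁ to Λ with value 1 (resp. 0) at x, one has Z_{Λ,β,r₁^+} ≤ exp(2dβ)·Z_{Λ,β,r₁^−} and ν'_{Λ,β,p̄}(r_x = 1 | r = r₁ on Λ∖{x}) ≤ p₀. -/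

import Mathlib

/-!
Statement 13: the conditioned percolation measure `ν'_{Λ,β,pb}` is stochastically
dominated by i.i.d. Bernoulli(p₀) site percolation (proof of Proposition 4.1 of the paper).
-/

open MeasureTheory Real
open scoped Classical ENNReal

namespace XYAnnealed

/-- Vertices of the lattice `ℤ^d`. -/
abbrev Vert (d : ℕ) := Fin d → ℤ

/-- Nearest-neighbour adjacency in `ℤ^d`: `|x - y|₁ = 1`. -/
def adj {d : ℕ} (x y : Vert d) : Prop := (∑ i, (x i - y i).natAbs) = 1

/-- The product of Lebesgue measure restricted to `[0, 2π)` over the coordinates of `Λ`. -/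
noncomputable def cubeMeasure {V : Type} (Λ : Finset V) : Measure (↥Λ → ℝ) :=
  Measure.pi fun _ => volume.restrict (Set.Ico 0 (2 * π))

/-- The (negated) Hamiltonian of the quenched XY model on `Λ` in the site environment
`r : ↥Λ → Bool`: `β Σ_{x,y ∈ Λ, x∼y} r_x r_y cos(θ_x - θ_y)`, each unordered pair being
counted once (whence the factor `β/2` in front of the ordered double sum). -/
noncomputable def energy {d : ℕ} (Λ : Finset (Vert d)) (β : ℝ) (r : ↥Λ → Bool)
    (θ : ↥Λ → ℝ) : ℝ :=
  (β / 2) * ∑ x : ↥Λ, ∑ y : ↥Λ,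
    if adj x.1 y.1 ∧ r x = true ∧ r y = true then Real.cos (θ x - θ y) else 0

/-- The pairing `m·θ := Σ_{x ∈ Λ} m_x θ_x`. -/
noncomputable def mDot {d : ℕ} (Λ : Finset (Vert d)) (m : ↥Λ → ℤ) (θ : ↥Λ → ℝ) : ℝ :=
  ∑ x : ↥Λ, (m x : ℝ) * θ x

/-- The partition function `Z_{Λ,β,r}` of the quenched XY model. -/
noncomputable def Z {d : ℕ} (Λ : Finset (Vert d)) (β : ℝ) (r : ↥Λ → Bool) : ℝ :=
  ∫ θ, Real.exp (energy Λ β r θ) ∂cubeMeasure Λ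

/-- The unnormalized correlation `∫ cos(mθ) e^{-H_{Λ,β,r}}`. -/
noncomputable def I {d : ℕ} (Λ : Finset (Vert d)) (β : ℝ) (r : ↥Λ → Bool)
    (m : ↥Λ → ℤ) : ℝ :=
  ∫ θ, Real.cos (mDot Λ m θ) * Real.exp (energy Λ β r θ) ∂cubeMeasure Λ

/-- The quenched expectation `⟨cos(mθ)⟩_{μ_{Λ,β,r}}`. -/
noncomputable def qExp {d : ℕ} (Λ : Finset (Vert d)) (β : ℝ) (r : ↥Λ → Bool)
    (m : ↥Λ → ℤ) : ℝ :=
  I Λ β r m / Z Λ β r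

/-- The Bernoulli(p) weight of a site configuration on `Λ`:
`P_{Λ,p}({r}) = ∏_{x ∈ Λ} p^{r_x} (1-p)^{1-r_x}`. -/
noncomputable def w {d : ℕ} (Λ : Finset (Vert d)) (p : ℝ) (r : ↥Λ → Bool) : ℝ :=
  ∏ x : ↥Λ, if r x then p else 1 - p

/-- The annealed expectation `⟨cos(mθ)⟩_{μ_{Λ,β,κ(pb)}}` for the XY model with annealed
Bernoulli(pb) site disorder. -/
noncomputable def annExp {d : ℕ} (Λ : Finset (Vert d)) (β : ℝ) (p : ℝ)
    (m : ↥Λ → ℤ) : ℝ :=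
  (∑ r : ↥Λ → Bool, w Λ p r * I Λ β r m) / (∑ r : ↥Λ → Bool, w Λ p r * Z Λ β r)

/-- The probability mass function of the measure `ν'_{Λ,β,pb}` on `{0,1}^Λ`,
`ν'({r}) = P_{Λ,pb}({r}) Z_{Λ,β,r} / Σ_{r'} P_{Λ,pb}({r'}) Z_{Λ,β,r'}`. -/
noncomputable def nu' {d : ℕ} (Λ : Finset (Vert d)) (β : ℝ) (pb : ℝ)
    (r : ↥Λ → Bool) : ℝ :=
  w Λ pb r * Z Λ β r / ∑ r' : ↥Λ → Bool, w Λ pb r' * Z Λ β r'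

lemma adj_symm {d : ℕ} {x y : Vert d} (h : adj x y) : adj y x := by
  unfold adj at *
  have : ∀ i, (y i - x i).natAbs = (x i - y i).natAbs := by
    intro i; rw [← Int.natAbs_neg]; congr 1; ring
  simpa only [this] using h

lemma adj_mem_image {d : ℕ} {x y : Vert d} (h : adj x y) :
    y ∈ (Finset.univ.image (fun i : Fin d => Function.update x i (x i + 1))) ∪
        (Finset.univ.image (fun i : Fin d => Function.update x i (x i - 1))) := by
  obtain ⟨i, -, hi⟩ : ∃ i ∈ Finset.univ, (x i - y i).natAbs ≠ 0 :=
    Finset.exists_ne_zero_of_sum_ne_zero (by rw [h]; exact one_ne_zero)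
  have h1 : (x i - y i).natAbs = 1 := by
    have hle : (x i - y i).natAbs ≤ 1 := h ▸ Finset.single_le_sum (f := fun j => (x j - y j).natAbs)
      (fun _ _ => Nat.zero_le _) (Finset.mem_univ i)
    omega
  have hrest : ∀ j, j ≠ i → x j = y j := by
    intro j hj
    have := (Finset.add_sum_erase Finset.univ (fun j => (x j - y j).natAbs) (Finset.mem_univ i)).symm
    rw [h, h1] at this
    have hz : ∑ j ∈ Finset.univ.erase i, (x j - y j).natAbs = 0 := by omega
    have := Finset.sum_eq_zero_iff.mp hz j (Finset.mem_erase.mpr ⟨hj, Finset.mem_univ j⟩)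
    have := Int.natAbs_eq_zero.mp this
    omega
  have hy : y = Function.update x i (y i) := by
    funext j
    rcases eq_or_ne j i with rfl | hj
    · simp
    · rw [Function.update_of_ne hj]; exact (hrest j hj).symm
  rcases Int.natAbs_eq_iff.mp h1 with h2 | h2
  · refine Finset.mem_union_right _ (Finset.mem_image.mpr ⟨i, Finset.mem_univ i, ?_⟩)
    have hv : y i = x i - 1 := by omega
    rw [hy, hv]
  · refine Finset.mem_union_left _ (Finset.mem_image.mpr ⟨i, Finset.mem_univ i, ?_⟩)
    have hv : y i = x i + 1 := by omega
    rw [hy, hv]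

lemma sum_adj_le {d : ℕ} (Λ : Finset (Vert d)) (x : Vert d) :
    ∑ y : ↥Λ, (if adj x y.1 then (1:ℝ) else 0) ≤ 2 * d := by
  rw [Finset.sum_boole]
  have hcard : (Finset.univ.filter (fun y : ↥Λ => adj x y.1)).card ≤ 2 * d := by
    have hinj : Set.InjOn (fun y : ↥Λ => y.1)
        (Finset.univ.filter (fun y : ↥Λ => adj x y.1)) :=
      fun a _ b _ hab => Subtype.ext hab
    calc (Finset.univ.filter (fun y : ↥Λ => adj x y.1)).card
        ≤ ((Finset.univ.image (fun i : Fin d => Function.update x i (x i + 1))) ∪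
           (Finset.univ.image (fun i : Fin d => Function.update x i (x i - 1)))).card := by
          apply Finset.card_le_card_of_injOn _ _ hinj
          intro y hy
          exact adj_mem_image (by simpa using hy)
      _ ≤ d + d := le_trans (Finset.card_union_le _ _)
            (add_le_add (le_trans (Finset.card_image_le) (by simp))
              (le_trans (Finset.card_image_le) (by simp)))
      _ = 2 * d := by ring
  exact_mod_cast hcard

variable {d : ℕ} {Λ : Finset (Vert d)} {β : ℝ} {r : ↥Λ → Bool}

lemma cubeMeasure_univ : cubeMeasure Λ Set.univ = ENNReal.ofReal (2 * π) ^ (Fintype.card ↥Λ) := by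
  rw [cubeMeasure, Measure.pi_univ]
  simp [Real.volume_Ico]

instance : IsFiniteMeasure (cubeMeasure Λ) :=
  ⟨by rw [cubeMeasure_univ]; exact ENNReal.pow_lt_top ENNReal.ofReal_lt_top⟩

lemma energy_cont : Continuous (energy Λ β r) := by
  apply continuous_const.mul
  apply continuous_finset_sum; intro x _
  apply continuous_finset_sum; intro y _
  split_ifs
  · exact Real.continuous_cos.comp ((continuous_apply x).sub (continuous_apply y))
  · exact continuous_const

lemma abs_energy_le (θ : ↥Λ → ℝ) :
    |energy Λ β r θ| ≤ |β| / 2 * (Fintype.card ↥Λ) ^ 2 := by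
  rw [energy, abs_mul, abs_div]
  have : |(∑ x : ↥Λ, ∑ y : ↥Λ,
      if adj x.1 y.1 ∧ r x = true ∧ r y = true then Real.cos (θ x - θ y) else 0)|
      ≤ (Fintype.card ↥Λ) ^ 2 := by
    calc _ ≤ ∑ x : ↥Λ, ∑ y : ↥Λ, (1:ℝ) := by
          refine le_trans (Finset.abs_sum_le_sum_abs _ _) (Finset.sum_le_sum fun x _ => ?_)
          refine le_trans (Finset.abs_sum_le_sum_abs _ _) (Finset.sum_le_sum fun y _ => ?_)
          split_ifs
          · exact Real.abs_cos_le_one _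
          · simp
      _ = (Fintype.card ↥Λ) ^ 2 := by simp [sq]
  calc |β| / |(2:ℝ)| * _ ≤ |β| / |(2:ℝ)| * (Fintype.card ↥Λ) ^ 2 := by
        exact mul_le_mul_of_nonneg_left this (by positivity)
    _ = |β| / 2 * (Fintype.card ↥Λ) ^ 2 := by norm_num

lemma integrable_exp_energy : Integrable (fun θ => Real.exp (energy Λ β r θ)) (cubeMeasure Λ) := by
  refine Integrable.mono' (integrable_const (Real.exp (|β| / 2 * (Fintype.card ↥Λ) ^ 2)))
    (Real.continuous_exp.comp energy_cont).aestronglyMeasurable (ae_of_all _ fun θ => ?_)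
  rw [Real.norm_eq_abs, Real.abs_exp]
  exact Real.exp_le_exp.mpr (le_trans (le_abs_self _) (abs_energy_le θ))

lemma Z_nonneg : 0 ≤ Z Λ β r :=
  integral_nonneg fun θ => (Real.exp_pos _).le

lemma Z_pos : 0 < Z Λ β r := by
  have h1 : 0 < (cubeMeasure Λ Set.univ).toReal := by
    rw [cubeMeasure_univ]
    rw [ENNReal.toReal_pow]
    have : (0:ℝ) < (ENNReal.ofReal (2 * π)).toReal := by
      rw [ENNReal.toReal_ofReal (by positivity)]; positivity
    positivity
  calc (0:ℝ) < (cubeMeasure Λ Set.univ).toReal * Real.exp (-(|β| / 2 * (Fintype.card ↥Λ) ^ 2)) :=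
        by positivity
    _ = ∫ _θ, Real.exp (-(|β| / 2 * (Fintype.card ↥Λ) ^ 2)) ∂cubeMeasure Λ := by
        rw [integral_const]; simp [smul_eq_mul, Measure.real]
    _ ≤ Z Λ β r := by
        refine integral_mono (integrable_const _) integrable_exp_energy fun θ => ?_
        exact Real.exp_le_exp.mpr (neg_le_of_abs_le (abs_energy_le θ))

lemma energy_update_le (hβ : 0 ≤ β) (x : ↥Λ) (r₁ : ↥Λ → Bool) (θ : ↥Λ → ℝ) :
    energy Λ β (Function.update r₁ x true) θ ≤
      energy Λ β (Function.update r₁ x false) θ + 2 * d * β := by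
  set rp := Function.update r₁ x true with hrp
  set rm := Function.update r₁ x false with hrm
  have hmono : ∀ z : ↥Λ, rm z = true → rp z = true := by
    intro z hz
    rcases eq_or_ne z x with rfl | hzx
    · rw [hrm] at hz; simp at hz
    · rw [hrm, Function.update_of_ne hzx] at hz
      rw [hrp, Function.update_of_ne hzx]; exact hz
  rw [energy, energy]
  rw [← sub_le_iff_le_add', ← mul_sub, ← Finset.sum_sub_distrib]
  have key : ∀ a : ↥Λ, (∑ y : ↥Λ,
        if adj a.1 y.1 ∧ rp a = true ∧ rp y = true then Real.cos (θ a - θ y) else 0) -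
      (∑ y : ↥Λ,
        if adj a.1 y.1 ∧ rm a = true ∧ rm y = true then Real.cos (θ a - θ y) else 0)
      ≤ ∑ y : ↥Λ, ((if a = x ∧ adj a.1 y.1 then (1:ℝ) else 0) +
          (if y = x ∧ adj a.1 y.1 then (1:ℝ) else 0)) := by
    intro a
    rw [← Finset.sum_sub_distrib]
    refine Finset.sum_le_sum fun y _ => ?_
    have hRHS : (0:ℝ) ≤ (if a = x ∧ adj a.1 y.1 then (1:ℝ) else 0) +
        (if y = x ∧ adj a.1 y.1 then (1:ℝ) else 0) := by positivity
    have hone : (a = x ∨ y = x) → adj a.1 y.1 →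
        (1:ℝ) ≤ (if a = x ∧ adj a.1 y.1 then (1:ℝ) else 0) +
          (if y = x ∧ adj a.1 y.1 then (1:ℝ) else 0) := by
      rintro (h | h) hadj
      · have h1 : (if a = x ∧ adj a.1 y.1 then (1:ℝ) else 0) = 1 := if_pos ⟨h, hadj⟩
        have h2 : (0:ℝ) ≤ if y = x ∧ adj a.1 y.1 then (1:ℝ) else 0 := by positivity
        linarith
      · have h1 : (if y = x ∧ adj a.1 y.1 then (1:ℝ) else 0) = 1 := if_pos ⟨h, hadj⟩
        have h2 : (0:ℝ) ≤ if a = x ∧ adj a.1 y.1 then (1:ℝ) else 0 := by positivity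
        linarith
    by_cases h1 : adj a.1 y.1 ∧ rp a = true ∧ rp y = true
    · by_cases h2 : adj a.1 y.1 ∧ rm a = true ∧ rm y = true
      · rw [if_pos h1, if_pos h2, sub_self]; exact hRHS
      · rw [if_pos h1, if_neg h2, sub_zero]
        have hax : a = x ∨ y = x := by
          by_contra hc
          push_neg at hc
          refine h2 ⟨h1.1, ?_, ?_⟩
          · rw [hrm, Function.update_of_ne hc.1]
            have := h1.2.1
            rwa [hrp, Function.update_of_ne hc.1] at this
          · rw [hrm, Function.update_of_ne hc.2]
            have := h1.2.2
            rwa [hrp, Function.update_of_ne hc.2] at this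
        exact le_trans (Real.cos_le_one _) (hone hax h1.1)
    · have h2 : ¬(adj a.1 y.1 ∧ rm a = true ∧ rm y = true) :=
        fun hc => h1 ⟨hc.1, hmono _ hc.2.1, hmono _ hc.2.2⟩
      rw [if_neg h1, if_neg h2, sub_self]
      exact hRHS
  calc (β / 2) * ∑ a : ↥Λ, ((∑ y : ↥Λ,
          if adj a.1 y.1 ∧ rp a = true ∧ rp y = true then Real.cos (θ a - θ y) else 0) -
        ∑ y : ↥Λ,
          if adj a.1 y.1 ∧ rm a = true ∧ rm y = true then Real.cos (θ a - θ y) else 0)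
      ≤ (β / 2) * ∑ a : ↥Λ, ∑ y : ↥Λ, ((if a = x ∧ adj a.1 y.1 then (1:ℝ) else 0) +
          (if y = x ∧ adj a.1 y.1 then (1:ℝ) else 0)) := by
        exact mul_le_mul_of_nonneg_left (Finset.sum_le_sum fun a _ => key a) (by positivity)
    _ ≤ (β / 2) * (2 * d + 2 * d) := by
        refine mul_le_mul_of_nonneg_left ?_ (by positivity)
        simp only [Finset.sum_add_distrib]
        refine add_le_add ?_ ?_
        · calc ∑ a : ↥Λ, ∑ y : ↥Λ, (if a = x ∧ adj a.1 y.1 then (1:ℝ) else 0)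
              = ∑ a : ↥Λ, (if a = x then ∑ y : ↥Λ, (if adj a.1 y.1 then (1:ℝ) else 0) else 0) := by
                refine Finset.sum_congr rfl fun a _ => ?_
                split_ifs with h
                · subst h; refine Finset.sum_congr rfl fun y _ => by simp
                · refine Finset.sum_eq_zero fun y _ => by simp [h]
            _ = ∑ y : ↥Λ, (if adj x.1 y.1 then (1:ℝ) else 0) := by
                rw [Finset.sum_ite_eq' Finset.univ x]
                simp
            _ ≤ 2 * d := sum_adj_le Λ _
        · calc ∑ a : ↥Λ, ∑ y : ↥Λ, (if y = x ∧ adj a.1 y.1 then (1:ℝ) else 0)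
              = ∑ a : ↥Λ, (if adj a.1 x.1 then (1:ℝ) else 0) := by
                refine Finset.sum_congr rfl fun a _ => ?_
                rw [show (fun y : ↥Λ => if y = x ∧ adj a.1 y.1 then (1:ℝ) else 0)
                    = (fun y : ↥Λ => if y = x then (if adj a.1 y.1 then (1:ℝ) else 0) else 0)
                    from funext fun y => by split_ifs with h1 h2 h3 <;> simp_all]
                rw [Finset.sum_ite_eq' Finset.univ x]
                simp
            _ = ∑ a : ↥Λ, (if adj x.1 a.1 then (1:ℝ) else 0) := by
                refine Finset.sum_congr rfl fun a _ => ?_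
                congr 1
                exact propext ⟨fun h => adj_symm h, fun h => adj_symm h⟩
            _ ≤ 2 * d := sum_adj_le Λ _
    _ = 2 * d * β := by ring

lemma Z_update_le (hβ : 0 ≤ β) (x : ↥Λ) (r₁ : ↥Λ → Bool) :
    Z Λ β (Function.update r₁ x true) ≤
      Real.exp (2 * d * β) * Z Λ β (Function.update r₁ x false) := by
  rw [Z, Z, ← integral_const_mul]
  refine integral_mono integrable_exp_energy (integrable_exp_energy.const_mul _) fun θ => ?_
  rw [← Real.exp_add]
  exact Real.exp_le_exp.mpr (by linarith [energy_update_le hβ x r₁ θ])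

lemma Z_le_prod (hβ : 0 ≤ β) (s : Finset ↥Λ) :
    ∀ r r' : ↥Λ → Bool, (∀ i, r i ≤ r' i) → (∀ i, r i ≠ r' i → i ∈ s) →
      Z Λ β r' ≤ Real.exp (2 * d * β) ^ s.card * Z Λ β r := by
  induction s using Finset.induction with
  | empty =>
    intro r r' hle hdiff
    have : r = r' := funext fun i => by
      by_contra hc
      simpa using hdiff i hc
    rw [this]
    simp
  | @insert x s hx ih =>
    intro r r' hle hdiff
    have hexp1 : (1:ℝ) ≤ Real.exp (2 * d * β) :=
      Real.one_le_exp (by positivity)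
    rw [Finset.card_insert_of_notMem hx]
    by_cases hxx : r x = r' x
    · have hdiff' : ∀ i, r i ≠ r' i → i ∈ s := by
        intro i hi
        rcases Finset.mem_insert.mp (hdiff i hi) with rfl | h
        · exact absurd hxx hi
        · exact h
      calc Z Λ β r' ≤ Real.exp (2 * d * β) ^ s.card * Z Λ β r := ih r r' hle hdiff'
        _ ≤ Real.exp (2 * d * β) ^ (s.card + 1) * Z Λ β r := by
            refine mul_le_mul_of_nonneg_right ?_ Z_nonneg
            exact pow_le_pow_right₀ hexp1 (Nat.le_succ _)
    · have hc := hle x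
      have hrx : r x = false := by
        cases hh : r x with
        | false => rfl
        | true =>
          cases hh' : r' x with
          | true => exact absurd (hh.trans hh'.symm) hxx
          | false => rw [hh, hh'] at hc; exact absurd hc (by decide)
      have hr'x : r' x = true := by
        cases hh' : r' x with
        | true => rfl
        | false =>
          cases hh : r x with
          | true => rw [hh, hh'] at hc; exact absurd hc (by decide)
          | false => rw [hh, hh'] at hxx; exact absurd rfl hxx
      set r'' := Function.update r' x false with hr''
      have h1 : r' = Function.update r'' x true := by
        funext j
        rcases eq_or_ne j x with rfl | hj
        · simp [hr'x]
        · rw [Function.update_of_ne hj, hr'', Function.update_of_ne hj]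
      have h2 : Z Λ β r' ≤ Real.exp (2 * d * β) * Z Λ β r'' := by
        have h3 : r'' = Function.update r'' x false := by
          funext j
          rcases eq_or_ne j x with rfl | hj
          · simp [hr'']
          · rw [Function.update_of_ne hj]
        nth_rewrite 1 [h1]
        nth_rewrite 2 [h3]
        exact Z_update_le hβ x r''
      have hle'' : ∀ i, r i ≤ r'' i := by
        intro i
        rcases eq_or_ne i x with rfl | hi
        · rw [hrx, hr'', Function.update_self]
        · rw [hr'', Function.update_of_ne hi]; exact hle i
      have hdiff'' : ∀ i, r i ≠ r'' i → i ∈ s := by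
        intro i hi
        rcases eq_or_ne i x with rfl | hix
        · exfalso; apply hi; rw [hrx, hr'', Function.update_self]
        · rcases Finset.mem_insert.mp
            (hdiff i (by rwa [hr'', Function.update_of_ne hix] at hi)) with rfl | h
          · exact absurd rfl hix
          · exact h
      calc Z Λ β r' ≤ Real.exp (2 * d * β) * Z Λ β r'' := h2
        _ ≤ Real.exp (2 * d * β) * (Real.exp (2 * d * β) ^ s.card * Z Λ β r) :=
            mul_le_mul_of_nonneg_left (ih r r'' hle'' hdiff'') (Real.exp_pos _).le
        _ = Real.exp (2 * d * β) ^ (s.card + 1) * Z Λ β r := by ring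

lemma w_pos {p : ℝ} (hp0 : 0 < p) (hp1 : p < 1) (r : ↥Λ → Bool) : 0 < w Λ p r := by
  refine Finset.prod_pos fun i _ => ?_
  split_ifs
  · exact hp0
  · linarith

lemma sum_w_eq_one {p : ℝ} : ∑ r : ↥Λ → Bool, w Λ p r = 1 := by
  have h := Finset.prod_univ_sum (fun _ : ↥Λ => (Finset.univ : Finset Bool))
    (fun _ j => if j then p else 1 - p)
  rw [Fintype.piFinset_univ] at h
  simp only [w]
  rw [← h]
  have h2 : ∀ _i : ↥Λ, (∑ j : Bool, if j then p else 1 - p) = 1 := fun i => by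
    rw [Fintype.sum_bool]; norm_num
  rw [Finset.prod_congr rfl fun i _ => h2 i, Finset.prod_const_one]

lemma S_pos {pb : ℝ} (hp0 : 0 < pb) (hp1 : pb < 1) :
    0 < ∑ r' : ↥Λ → Bool, w Λ pb r' * Z Λ β r' := by
  refine Finset.sum_pos (fun r' _ => mul_pos (w_pos hp0 hp1 r') Z_pos) ⟨fun _ => true, Finset.mem_univ _⟩

section Main
variable {pb : ℝ}

lemma exp_cancel (hβ : (0:ℝ) ≤ β) :
    Real.exp (-(2 * (d:ℝ)) * β) * Real.exp (2 * (d:ℝ) * β) = 1 := by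
  rw [← Real.exp_add]
  rw [show -(2 * (d:ℝ)) * β + 2 * (d:ℝ) * β = 0 by ring, Real.exp_zero]

lemma scalar_id (hβ : 0 < β) (hp0 : 0 < pb) (hp1 : pb < 1) (u v : Bool) :
    (if (u ⊓ v : Bool) then pb else 1 - pb) *
      (if (u ⊔ v : Bool) then pb / (pb + (1 - pb) * Real.exp (-(2 * (d:ℝ)) * β))
        else 1 - pb / (pb + (1 - pb) * Real.exp (-(2 * (d:ℝ)) * β)))
    = ((if u then pb else 1 - pb) *
        (if v then pb / (pb + (1 - pb) * Real.exp (-(2 * (d:ℝ)) * β))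
          else 1 - pb / (pb + (1 - pb) * Real.exp (-(2 * (d:ℝ)) * β)))) *
      (if u ⊓ v ≠ u then Real.exp (2 * (d:ℝ) * β) else 1) := by
  set E := Real.exp (-(2 * (d:ℝ)) * β) with hE
  have hEpos : 0 < E := Real.exp_pos _
  have hD : 0 < pb + (1 - pb) * E := by nlinarith
  have hcancel : E * Real.exp (2 * (d:ℝ) * β) = 1 := exp_cancel hβ.le
  have h1m : 1 - pb / (pb + (1 - pb) * E) = (1 - pb) * E / (pb + (1 - pb) * E) := by
    field_simp; ring
  cases u <;> cases v <;> norm_num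
  -- u = true, v = false : (1-pb) * p₀ = pb * (1-p₀) * e^{2dβ}
  rw [h1m]
  have hstep : pb * ((1 - pb) * E / (pb + (1 - pb) * E)) * Real.exp (2 * (d:ℝ) * β)
      = pb * (1 - pb) * (E * Real.exp (2 * (d:ℝ) * β)) / (pb + (1 - pb) * E) := by
    ring
  rw [hstep, hcancel, mul_one]
  ring

lemma prod_id (hβ : 0 < β) (hp0 : 0 < pb) (hp1 : pb < 1) (a b : ↥Λ → Bool) :
    w Λ pb (a ⊓ b) * w Λ (pb / (pb + (1 - pb) * Real.exp (-(2 * (d:ℝ)) * β))) (a ⊔ b)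
    = (w Λ pb a * w Λ (pb / (pb + (1 - pb) * Real.exp (-(2 * (d:ℝ)) * β))) b) *
      Real.exp (2 * (d:ℝ) * β) ^
        (Finset.univ.filter fun i : ↥Λ => (a ⊓ b) i ≠ a i).card := by
  have hpow : Real.exp (2 * (d:ℝ) * β) ^
        (Finset.univ.filter fun i : ↥Λ => (a ⊓ b) i ≠ a i).card
      = ∏ i : ↥Λ, (if (a ⊓ b) i ≠ a i then Real.exp (2 * (d:ℝ) * β) else 1) := by
    rw [Finset.prod_ite, Finset.prod_const, Finset.prod_const_one, mul_one]
  rw [hpow, w, w, w, w, ← Finset.prod_mul_distrib, ← Finset.prod_mul_distrib,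
    ← Finset.prod_mul_distrib]
  refine Finset.prod_congr rfl fun i _ => ?_
  exact scalar_id hβ hp0 hp1 (a i) (b i)

lemma key_ineq (hβ : 0 < β) (hp0 : 0 < pb) (hp1 : pb < 1) (a b : ↥Λ → Bool) :
    nu' Λ β pb a * w Λ (pb / (pb + (1 - pb) * Real.exp (-(2 * (d:ℝ)) * β))) b ≤
      nu' Λ β pb (a ⊓ b) *
        w Λ (pb / (pb + (1 - pb) * Real.exp (-(2 * (d:ℝ)) * β))) (a ⊔ b) := by
  have hE : (0:ℝ) < Real.exp (-(2 * (d:ℝ)) * β) := Real.exp_pos _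
  have hD : 0 < pb + (1 - pb) * Real.exp (-(2 * (d:ℝ)) * β) := by nlinarith
  have hp₀0 : 0 < pb / (pb + (1 - pb) * Real.exp (-(2 * (d:ℝ)) * β)) := div_pos hp0 hD
  have hp₀1 : pb / (pb + (1 - pb) * Real.exp (-(2 * (d:ℝ)) * β)) < 1 :=
    (div_lt_one hD).mpr (by nlinarith)
  set p₀ := pb / (pb + (1 - pb) * Real.exp (-(2 * (d:ℝ)) * β)) with hp₀
  have hS := S_pos (Λ := Λ) (β := β) hp0 hp1
  rw [nu', nu', div_mul_eq_mul_div, div_mul_eq_mul_div]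
  rw [div_le_div_iff_of_pos_right hS]
  set s := Finset.univ.filter fun i : ↥Λ => (a ⊓ b) i ≠ a i with hs
  have hZ : Z Λ β a ≤ Real.exp (2 * (d:ℝ) * β) ^ s.card * Z Λ β (a ⊓ b) := by
    refine Z_le_prod hβ.le s (a ⊓ b) a (fun i => inf_le_left (b := b i)) fun i hi => ?_
    rw [hs]
    exact Finset.mem_filter.mpr ⟨Finset.mem_univ i, hi⟩
  calc w Λ pb a * Z Λ β a * w Λ p₀ b
      = (w Λ pb a * w Λ p₀ b) * Z Λ β a := by ring
    _ ≤ (w Λ pb a * w Λ p₀ b) * (Real.exp (2 * (d:ℝ) * β) ^ s.card * Z Λ β (a ⊓ b)) := by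
        refine mul_le_mul_of_nonneg_left hZ ?_
        exact mul_nonneg (w_pos hp0 hp1 a).le (w_pos hp₀0 hp₀1 b).le
    _ = (w Λ pb a * w Λ p₀ b * Real.exp (2 * (d:ℝ) * β) ^ s.card) * Z Λ β (a ⊓ b) := by
        ring
    _ = w Λ pb (a ⊓ b) * Z Λ β (a ⊓ b) * w Λ p₀ (a ⊔ b) := by
        rw [← prod_id hβ hp0 hp1 a b]; ring

end Main

lemma w_update_true (p : ℝ) (x : ↥Λ) (r₁ : ↥Λ → Bool) :
    w Λ p (Function.update r₁ x true)
      = p * ∏ i ∈ Finset.univ.erase x, (if r₁ i then p else 1 - p) := by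
  rw [w, ← Finset.mul_prod_erase Finset.univ _ (Finset.mem_univ x)]
  congr 1
  · simp
  · refine Finset.prod_congr rfl fun i hi => ?_
    rw [Function.update_of_ne (Finset.ne_of_mem_erase hi)]

lemma w_update_false (p : ℝ) (x : ↥Λ) (r₁ : ↥Λ → Bool) :
    w Λ p (Function.update r₁ x false)
      = (1 - p) * ∏ i ∈ Finset.univ.erase x, (if r₁ i then p else 1 - p) := by
  rw [w, ← Finset.mul_prod_erase Finset.univ _ (Finset.mem_univ x)]
  congr 1
  · simp
  · refine Finset.prod_congr rfl fun i hi => ?_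
    rw [Function.update_of_ne (Finset.ne_of_mem_erase hi)]

/-- Fix `β ∈ (0,∞)`, `pb ∈ (0,1)` and set
`p₀ := pb/(pb + (1-pb) e^{-2dβ})`.  Then `ν'_{Λ,β,pb}` is stochastically dominated by the
i.i.d. Bernoulli(p₀) measure: `E_{ν'}[f] ≤ E_{P_{Λ,p₀}}[f]` for every nonnegative
increasing `f`.  In particular, for every `x ∈ Λ` and `r₁ ∈ {0,1}^{Λ∖{x}}`, writing
`r₁⁺` (resp. `r₁⁻`) for the extension of `r₁` with value `1` (resp. `0`) at `x`,
`Z_{Λ,β,r₁⁺} ≤ e^{2dβ} Z_{Λ,β,r₁⁻}` and the conditional probability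
`ν'(r_x = 1 | r = r₁ on Λ∖{x}) = ν'(r₁⁺)/(ν'(r₁⁺) + ν'(r₁⁻))` is at most `p₀`. -/
theorem nu'_dominated (d : ℕ) (β : ℝ) (hβ : 0 < β)
    (pb : ℝ) (hp0 : 0 < pb) (hp1 : pb < 1) (Λ : Finset (Vert d)) :
    (∀ f : (↥Λ → Bool) → ℝ, (∀ r, 0 ≤ f r) →
      (∀ r r' : ↥Λ → Bool, (∀ x, r x ≤ r' x) → f r ≤ f r') →
      ∑ r : ↥Λ → Bool, nu' Λ β pb r * f r ≤
        ∑ r : ↥Λ → Bool,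
          w Λ (pb / (pb + (1 - pb) * Real.exp (-(2 * (d:ℝ)) * β))) r * f r) ∧
    (∀ (x : ↥Λ) (r₁ : ↥Λ → Bool),
      Z Λ β (Function.update r₁ x true) ≤
        Real.exp (2 * (d:ℝ) * β) * Z Λ β (Function.update r₁ x false) ∧
      nu' Λ β pb (Function.update r₁ x true) /
          (nu' Λ β pb (Function.update r₁ x true) + nu' Λ β pb (Function.update r₁ x false)) ≤
        pb / (pb + (1 - pb) * Real.exp (-(2 * (d:ℝ)) * β))) := by

  have hE : (0:ℝ) < Real.exp (-(2 * (d:ℝ)) * β) := Real.exp_pos _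
  have hD : 0 < pb + (1 - pb) * Real.exp (-(2 * (d:ℝ)) * β) := by nlinarith
  have hp₀0 : 0 < pb / (pb + (1 - pb) * Real.exp (-(2 * (d:ℝ)) * β)) := div_pos hp0 hD
  have hp₀1 : pb / (pb + (1 - pb) * Real.exp (-(2 * (d:ℝ)) * β)) < 1 :=
    (div_lt_one hD).mpr (by nlinarith)
  have hS := S_pos (Λ := Λ) (β := β) hp0 hp1
  constructor
  · intro f hf0 hfmono
    have hsum : ∑ r : ↥Λ → Bool, nu' Λ β pb r = 1 := by
      simp only [nu']
      rw [← Finset.sum_div, div_self hS.ne']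
    have h := holley (α := ↥Λ → Bool) (β := ℝ) (nu' Λ β pb)
      (w Λ (pb / (pb + (1 - pb) * Real.exp (-(2 * (d:ℝ)) * β)))) f
      (fun r => hf0 r)
      (fun r => div_nonneg (mul_nonneg (w_pos hp0 hp1 r).le Z_nonneg) hS.le)
      (fun r => (w_pos hp₀0 hp₀1 r).le)
      (fun r r' hrr' => hfmono r r' fun x => hrr' x)
      (by rw [hsum, sum_w_eq_one])
      (key_ineq hβ hp0 hp1)
    calc ∑ r : ↥Λ → Bool, nu' Λ β pb r * f r
        = ∑ r : ↥Λ → Bool, f r * nu' Λ β pb r :=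
          Finset.sum_congr rfl fun r _ => mul_comm _ _
      _ ≤ ∑ r : ↥Λ → Bool,
            f r * w Λ (pb / (pb + (1 - pb) * Real.exp (-(2 * (d:ℝ)) * β))) r := h
      _ = ∑ r : ↥Λ → Bool,
            w Λ (pb / (pb + (1 - pb) * Real.exp (-(2 * (d:ℝ)) * β))) r * f r :=
          Finset.sum_congr rfl fun r _ => mul_comm _ _
  · intro x r₁
    refine ⟨Z_update_le hβ.le x r₁, ?_⟩
    set W := ∏ i ∈ Finset.univ.erase x, (if r₁ i then pb else 1 - pb) with hW
    have hWpos : 0 < W := by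
      rw [hW]
      refine Finset.prod_pos fun i _ => ?_
      split_ifs
      · exact hp0
      · linarith
    have hZp : (0:ℝ) < Z Λ β (Function.update r₁ x true) := Z_pos
    have hZm : (0:ℝ) < Z Λ β (Function.update r₁ x false) := Z_pos
    have hA : 0 < w Λ pb (Function.update r₁ x true) * Z Λ β (Function.update r₁ x true) :=
      mul_pos (w_pos hp0 hp1 _) hZp
    have hB : 0 < w Λ pb (Function.update r₁ x false) * Z Λ β (Function.update r₁ x false) :=
      mul_pos (w_pos hp0 hp1 _) hZm
    have hform : nu' Λ β pb (Function.update r₁ x true) /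
        (nu' Λ β pb (Function.update r₁ x true) + nu' Λ β pb (Function.update r₁ x false))
        = (w Λ pb (Function.update r₁ x true) * Z Λ β (Function.update r₁ x true)) /
          (w Λ pb (Function.update r₁ x true) * Z Λ β (Function.update r₁ x true) +
           w Λ pb (Function.update r₁ x false) * Z Λ β (Function.update r₁ x false)) := by
      simp only [nu']
      rw [← add_div, div_div_div_comm, div_self hS.ne', div_one]
    rw [hform, w_update_true, w_update_false, ← hW]
    have hABpos : 0 < pb * W * Z Λ β (Function.update r₁ x true) +
        (1 - pb) * W * Z Λ β (Function.update r₁ x false) := by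
      have h1 := mul_pos (mul_pos hp0 hWpos) hZp
      have h2 := mul_pos (mul_pos (show (0:ℝ) < 1 - pb by linarith) hWpos) hZm
      linarith
    rw [div_le_div_iff₀ hABpos hD]
    have hZZ := Z_update_le hβ.le x r₁
    have hcancel : Real.exp (-(2 * (d:ℝ)) * β) * Real.exp (2 * (d:ℝ) * β) = 1 :=
      exp_cancel hβ.le
    have h6 : (1 - pb) * Real.exp (-(2 * (d:ℝ)) * β) * Z Λ β (Function.update r₁ x true)
        ≤ (1 - pb) * Z Λ β (Function.update r₁ x false) := by
      calc (1 - pb) * Real.exp (-(2 * (d:ℝ)) * β) * Z Λ β (Function.update r₁ x true)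
          ≤ (1 - pb) * Real.exp (-(2 * (d:ℝ)) * β) *
            (Real.exp (2 * (d:ℝ) * β) * Z Λ β (Function.update r₁ x false)) :=
            mul_le_mul_of_nonneg_left hZZ (mul_nonneg (by linarith) hE.le)
        _ = (1 - pb) * Z Λ β (Function.update r₁ x false) *
            (Real.exp (-(2 * (d:ℝ)) * β) * Real.exp (2 * (d:ℝ) * β)) := by ring
        _ = (1 - pb) * Z Λ β (Function.update r₁ x false) := by rw [hcancel, mul_one]
    have h7 := mul_le_mul_of_nonneg_left h6 (mul_nonneg hp0.le hWpos.le)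
    nlinarith [h7]


end XYAnnealed
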